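/- For the U-shaped attribution rule, the impression adjacency relation with post-attribution contribution bound enforcement is invalid: for any p > 3 there exist adjacent datasets D and D' (differing by one impression), using contribution bound r = 1, such that ‖attr(D) - attr(D')‖₁ ≥ 0.2 ln((p-1)/4). Hence the ℓ1-distance is not bounded by C₀·r for any absolute constant C₀. -/

import Mathlib

/-! Framework for differentially private ad conversion measurement
(Delaney et al., "Differentially Private Ad Conversion Measurement"). -/

structure Impression where
  time : ℕ
  user : ℕ
  pub : ℕ
  adv : ℕ
  id : ℕ
deriving DecidableEq

structure Conversion where
  time : ℕ
  user : ℕ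
  adv : ℕ
  id : ℕ
deriving DecidableEq

structure Dataset where
  imps : List Impression
  convs : List Conversion

/-- An attribution rule maps a time-ordered list of impressions and a conversion
to a list of credits (one per impression). -/
abbrev AttrRule := List Impression → Conversion → List ℝ

/-- A valid attribution rule outputs one nonnegative weight per impression, summing to 1. -/
def ValidRule (a : AttrRule) : Prop :=
  ∀ is c, is ≠ [] →
    (a is c).length = is.length ∧ (a is c).sum = 1 ∧ ∀ w ∈ a is c, (0 : ℝ) ≤ w

/-- Impressions eligible for attribution of conversion `c`: those occurring earlier
with the same user and advertiser. -/
def eligible (D : Dataset) (c : Conversion) : List Impression :=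
  D.imps.filter fun i => decide (i.time < c.time ∧ i.user = c.user ∧ i.adv = c.adv)

/-- ℓ₁ distance between attributed datasets. -/
noncomputable def l1dist (w w' : (Impression × Conversion) →₀ ℝ) : ℝ :=
  (w - w').sum fun _ v => |v|

/-- Impressions and conversions are listed in time order. -/
def SortedDS (D : Dataset) : Prop :=
  D.imps.Pairwise (fun i j => i.time ≤ j.time) ∧
  D.convs.Pairwise (fun c c' => c.time ≤ c'.time)

/-- Inner loop of post-attribution contribution-bound enforcement: each weighted
(impression, conversion) pair is kept only if the remaining bound of its scope covers
the weight, in which case the weight is deducted. -/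
noncomputable def applyPairs {σ : Type} [DecidableEq σ] (s : Impression → σ) (c : Conversion) :
    List (Impression × ℝ) → (σ → ℝ) × ((Impression × Conversion) →₀ ℝ) →
      (σ → ℝ) × ((Impression × Conversion) →₀ ℝ)
  | [], st => st
  | (i, w) :: rest, st =>
      if w ≤ st.1 (s i) then
        applyPairs s c rest
          (Function.update st.1 (s i) (st.1 (s i) - w), st.2 + Finsupp.single (i, c) w)
      else
        applyPairs s c rest st

/-- Attribution with post-attribution contribution bound enforcement (Algorithm 1),
with contribution bounding scope map `s` and contribution bound `r`. -/
noncomputable def postAttr {σ : Type} [DecidableEq σ] (a : AttrRule) (s : Impression → σ)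
    (r : ℝ) (D : Dataset) : (Impression × Conversion) →₀ ℝ :=
  (D.convs.foldl
    (fun st c => applyPairs s c ((eligible D c).zip (a (eligible D c) c)) st)
    ((fun _ => r : σ → ℝ), (0 : (Impression × Conversion) →₀ ℝ))).2

/-- Attribution with pre-attribution contribution bound enforcement (Algorithm 2):
for each conversion, every scope with an eligible impression pays one unit of its bound
if available, otherwise its impressions are excluded from attribution. -/
noncomputable def preAttr {σ : Type} [DecidableEq σ] (a : AttrRule) (s : Impression → σ)
    (r : ℝ) (D : Dataset) : (Impression × Conversion) →₀ ℝ :=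
  (D.convs.foldl
    (fun (st : (σ → ℝ) × ((Impression × Conversion) →₀ ℝ)) c =>
      let el := eligible D c
      let surv := el.filter fun i => decide ((1 : ℝ) ≤ st.1 (s i))
      let scopes := (el.map s).dedup
      ((fun x => if x ∈ scopes ∧ (1 : ℝ) ≤ st.1 x then st.1 x - 1 else st.1 x : σ → ℝ),
        st.2 + ((surv.zip (a surv c)).map fun p => Finsupp.single (p.1, c) p.2).sum))
    ((fun _ => r : σ → ℝ), (0 : (Impression × Conversion) →₀ ℝ))).2

/-- Attribution without any contribution bound enforcement. -/
noncomputable def attrNoCap (a : AttrRule) (D : Dataset) :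
    (Impression × Conversion) →₀ ℝ :=
  (D.convs.map fun c =>
    (((eligible D c).zip (a (eligible D c) c)).map fun p => Finsupp.single (p.1, c) p.2).sum).sum

/-- Adjacency: `D'` results from `D` by adding a single impression (in time order). -/
def AddOneImpression (D D' : Dataset) : Prop :=
  ∃ (i0 : Impression) (l₁ l₂ : List Impression),
    D.imps = l₁ ++ l₂ ∧ D'.imps = l₁ ++ i0 :: l₂ ∧ D.convs = D'.convs

/-- Adjacency: `D` results from `D'` by removing all impressions whose scope (under `si`)
is `v` and all conversions whose scope (under `sc`) is `v`. -/
def RemovesScope {σ : Type} [DecidableEq σ] (si : Impression → σ)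
    (sc : Conversion → Option σ) (v : σ) (D D' : Dataset) : Prop :=
  D.imps = D'.imps.filter (fun i => decide (si i ≠ v)) ∧
  D.convs = D'.convs.filter (fun c => decide (sc c ≠ some v))

/-- First-touch attribution. -/
noncomputable def FTA : AttrRule := fun is _ =>
  match is with
  | [] => []
  | _ :: t => 1 :: t.map fun _ => 0

/-- Last-touch attribution. -/
noncomputable def LTA : AttrRule := fun is _ =>
  match is with
  | [] => []
  | _ :: _ => List.replicate (is.length - 1) 0 ++ [1]

/-- Uniform multi-touch attribution. -/
noncomputable def UNI : AttrRule := fun is _ => is.map fun _ => ((is.length : ℝ))⁻¹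

/-- U-shaped attribution. -/
noncomputable def USH : AttrRule := fun is _ =>
  match is with
  | [] => []
  | [_] => [1]
  | [_, _] => [0.5, 0.5]
  | _ :: _ :: _ :: _ =>
      (0.4 : ℝ) :: (List.replicate (is.length - 2) ((0.2 : ℝ) / ((is.length : ℝ) - 2)) ++ [0.4])

/-- Exponential time decay attribution with half-life `th`. -/
noncomputable def EXPR (th : ℝ) : AttrRule := fun is c =>
  let wt : Impression → ℝ := fun i => (2 : ℝ) ^ (-(((c.time : ℝ) - (i.time : ℝ)) / th))
  is.map fun i => wt i / (is.map wt).sum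

namespace ThmA9

/-! ### Per-impression greedy simulation -/

noncomputable def runB (b : ℝ) : List (Option ℝ) → ℝ
  | [] => b
  | none :: l => runB b l
  | some w :: l => runB (if w ≤ b then b - w else b) l

@[simp] lemma runB_nil (b : ℝ) : runB b [] = b := rfl
@[simp] lemma runB_none_cons (b : ℝ) (l) : runB b (none :: l) = runB b l := rfl
@[simp] lemma runB_some_cons (b w : ℝ) (l) :
    runB b (some w :: l) = runB (if w ≤ b then b - w else b) l := rfl

lemma runB_append (b : ℝ) (l₁ l₂ : List (Option ℝ)) :
    runB b (l₁ ++ l₂) = runB (runB b l₁) l₂ := by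
  induction l₁ generalizing b with
  | nil => rfl
  | cons o l ih => cases o <;> simp [ih]

lemma runB_none (b : ℝ) (l : List (Option ℝ)) (h : ∀ o ∈ l, o = none) :
    runB b l = b := by
  induction l with
  | nil => rfl
  | cons o l ih =>
    have ho := h o (by simp)
    subst ho
    simpa using ih fun o ho => h o (by simp [ho])

lemma runB_stuck (b w : ℝ) (hw : ¬ w ≤ b) (n : ℕ) :
    runB b (List.replicate n (some w)) = b := by
  induction n with
  | zero => rfl
  | succ n ih => simp [List.replicate_succ, hw, ih]

lemma runB_mul (w : ℝ) (hw : 0 < w) : ∀ (m n : ℕ), m ≤ n →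
    runB ((n : ℝ) * w) (List.replicate m (some w)) = ((n - m : ℕ) : ℝ) * w := by
  intro m
  induction m with
  | zero => intro n _; simp
  | succ m ih =>
    intro n hn
    have hn1 : 1 ≤ n := by omega
    have hle : w ≤ (n : ℝ) * w := by
      have : (1:ℝ) ≤ (n:ℝ) := by exact_mod_cast hn1
      nlinarith
    have hsub : (n : ℝ) * w - w = ((n - 1 : ℕ) : ℝ) * w := by
      have h' : ((n - 1 : ℕ) : ℝ) = (n : ℝ) - 1 := by
        push_cast [Nat.cast_sub hn1]; ring
      rw [h']; ring
    have hmn : m ≤ n - 1 := by omega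
    rw [List.replicate_succ, runB_some_cons, if_pos hle, hsub, ih (n-1) hmn]
    congr 2
    omega

lemma runB_04 (n : ℕ) (hn : 2 ≤ n) :
    runB 1 (List.replicate n (some (0.4 : ℝ))) = 0.2 := by
  obtain ⟨m, rfl⟩ : ∃ m, n = m + 2 := ⟨n - 2, by omega⟩
  have h1 : ((0.4 : ℝ)) ≤ 1 := by norm_num
  have h2 : ((0.4 : ℝ)) ≤ 1 - 0.4 := by norm_num
  have h3 : ¬ ((0.4 : ℝ) ≤ 1 - 0.4 - 0.4) := by norm_num
  rw [show m + 2 = 2 + m by omega, List.replicate_add]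
  rw [runB_append]
  have : runB 1 (List.replicate 2 (some (0.4:ℝ))) = 1 - 0.4 - 0.4 := by
    simp [List.replicate_succ, h1, h2]
  rw [this, runB_stuck _ _ h3]
  norm_num

end ThmA9
namespace ThmA9X

abbrev Fsp := (Impression × Conversion) →₀ ℝ
abbrev St := (Impression → ℝ) × Fsp

noncomputable def idsc : Impression → Impression := fun i => i

lemma applyPairs_nil (c : Conversion) (st : St) : applyPairs idsc c [] st = st := rfl

lemma applyPairs_cons (c : Conversion) (i : Impression) (w : ℝ) (L : List (Impression × ℝ)) (st : St) :
    applyPairs idsc c ((i, w) :: L) st =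
      if w ≤ st.1 i then
        applyPairs idsc c L
          (Function.update st.1 i (st.1 i - w), st.2 + Finsupp.single (i, c) w)
      else applyPairs idsc c L st := rfl

lemma AP_other (c c' : Conversion) (hcc : c' ≠ c) (x : Impression) :
    ∀ (L : List (Impression × ℝ)) (st : St),
      (applyPairs idsc c L st).2 (x, c') = st.2 (x, c') := by
  intro L
  induction L with
  | nil => intro st; rfl
  | cons p L ih =>
    intro st
    obtain ⟨i, w⟩ := p
    rw [applyPairs_cons]
    by_cases hle : w ≤ st.1 i
    · rw [if_pos hle, ih]
      simp [Finsupp.single_apply, hcc.symm]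
    · rw [if_neg hle]; exact ih st

lemma AP_notmem (c : Conversion) (x : Impression) :
    ∀ (L : List (Impression × ℝ)) (st : St), x ∉ L.map Prod.fst →
      (applyPairs idsc c L st).1 x = st.1 x ∧
      (applyPairs idsc c L st).2 (x, c) = st.2 (x, c) := by
  intro L
  induction L with
  | nil => intro st _; exact ⟨rfl, rfl⟩
  | cons p L ih =>
    intro st hx
    obtain ⟨i, w⟩ := p
    have hix : i ≠ x := by simp at hx; exact fun h => hx.1 h.symm
    have hx' : x ∉ L.map Prod.fst := by simp at hx ⊢; exact hx.2
    rw [applyPairs_cons]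
    by_cases hle : w ≤ st.1 i
    · rw [if_pos hle]
      obtain ⟨h1, h2⟩ :=
        ih (Function.update st.1 i (st.1 i - w), st.2 + Finsupp.single (i, c) w) hx'
      constructor
      · rw [h1]; simp [idsc, Function.update_of_ne (Ne.symm hix)]
      · rw [h2]; simp [Finsupp.single_apply, hix]
    · rw [if_neg hle]; exact ih st hx'

lemma AP_mem (c : Conversion) (x : Impression) (w : ℝ) :
    ∀ (L₁ L₂ : List (Impression × ℝ)) (st : St), x ∉ L₁.map Prod.fst → x ∉ L₂.map Prod.fst →
      (applyPairs idsc c (L₁ ++ (x, w) :: L₂) st).1 x =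
        (if w ≤ st.1 x then st.1 x - w else st.1 x) ∧
      (applyPairs idsc c (L₁ ++ (x, w) :: L₂) st).2 (x, c) =
        st.2 (x, c) + (if w ≤ st.1 x then w else 0) := by
  intro L₁
  induction L₁ with
  | nil =>
    intro L₂ st _ hx2
    rw [List.nil_append, applyPairs_cons]
    by_cases hle : w ≤ st.1 x
    · simp only [idsc, if_pos hle]
      obtain ⟨h1, h2⟩ :=
        AP_notmem c x L₂
          (Function.update st.1 x (st.1 x - w), st.2 + Finsupp.single (x, c) w) hx2
      constructor
      · rw [h1]; simp
      · rw [h2]; simp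
    · simp only [idsc, if_neg hle]
      obtain ⟨h1, h2⟩ := AP_notmem c x L₂ st hx2
      exact ⟨h1, by rw [h2]; ring⟩
  | cons p L ih =>
    intro L₂ st hx1 hx2
    obtain ⟨i, w'⟩ := p
    have hix : i ≠ x := by simp at hx1; exact fun h => hx1.1 h.symm
    have hxi : x ≠ i := Ne.symm hix
    have hx' : x ∉ L.map Prod.fst := by simp at hx1 ⊢; exact hx1.2
    rw [List.cons_append, applyPairs_cons]
    by_cases hle : w' ≤ st.1 i
    · rw [if_pos hle]
      obtain ⟨h1, h2⟩ :=
        ih L₂ (Function.update st.1 i (st.1 i - w'), st.2 + Finsupp.single (i, c) w') hx' hx2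
      constructor
      · rw [h1]; simp [Function.update_apply, hxi]
      · rw [h2]; simp [Function.update_apply, hxi, Finsupp.single_apply, hix]
    · rw [if_neg hle]; exact ih L₂ st hx' hx2

end ThmA9X
namespace ThmA9X

noncomputable def pairsOf (D : Dataset) (c : Conversion) : List (Impression × ℝ) :=
  (eligible D c).zip (USH (eligible D c) c)

noncomputable def step (D : Dataset) (st : St) (c : Conversion) : St :=
  applyPairs idsc c (pairsOf D c) st

lemma postAttr_eq (D : Dataset) :
    postAttr USH (fun i => i) 1 D = (D.convs.foldl (step D) ((fun _ => 1), 0)).2 := rfl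

def compat (D : Dataset) (x : Impression) (c : Conversion) : Option ℝ → Prop
  | none => x ∉ (pairsOf D c).map Prod.fst
  | some w => ∃ L₁ L₂, pairsOf D c = L₁ ++ (x, w) :: L₂ ∧
      x ∉ L₁.map Prod.fst ∧ x ∉ L₂.map Prod.fst

lemma foldl_budget (D : Dataset) (x : Impression) (off : Conversion → Option ℝ) :
    ∀ (cs : List Conversion) (st : St), (∀ c ∈ cs, compat D x c (off c)) →
      (cs.foldl (step D) st).1 x = ThmA9.runB (st.1 x) (cs.map off) := by
  intro cs
  induction cs with
  | nil => intro st _; rfl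
  | cons c cs ih =>
    intro st h
    have hc := h c (by simp)
    rw [List.foldl_cons, List.map_cons]
    have hrest : ∀ c' ∈ cs, compat D x c' (off c') := fun c' hc' => h c' (by simp [hc'])
    rcases ho : off c with _ | w
    · rw [ho] at hc
      rw [ih _ hrest, show step D st c = applyPairs idsc c (pairsOf D c) st from rfl,
        (AP_notmem c x (pairsOf D c) st hc).1]
      rfl
    · rw [ho] at hc
      obtain ⟨L₁, L₂, hL, h1, h2⟩ := hc
      rw [ih _ hrest]
      have := (AP_mem c x w L₁ L₂ st h1 h2).1
      rw [← hL] at this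
      rw [show step D st c = applyPairs idsc c (pairsOf D c) st from rfl, this]
      rfl

lemma foldl_keep (D : Dataset) (x : Impression) (c₀ : Conversion) :
    ∀ (cs : List Conversion) (st : St), c₀ ∉ cs →
      (cs.foldl (step D) st).2 (x, c₀) = st.2 (x, c₀) := by
  intro cs
  induction cs with
  | nil => intro st _; rfl
  | cons c cs ih =>
    intro st h
    rw [List.foldl_cons, ih _ (fun hm => h (by simp [hm]))]
    exact AP_other c c₀ (fun he => h (by simp [he])) x (pairsOf D c) st

lemma value_at (D : Dataset) (x : Impression) (c₀ : Conversion) (w : ℝ)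
    (off : Conversion → Option ℝ)
    (cs₁ cs₂ : List Conversion)
    (hcv : D.convs = cs₁ ++ c₀ :: cs₂)
    (hc : compat D x c₀ (some w))
    (h₁ : ∀ c ∈ cs₁, compat D x c (off c))
    (h₀₁ : c₀ ∉ cs₁) (h₀₂ : c₀ ∉ cs₂) :
    postAttr USH (fun i => i) 1 D (x, c₀) =
      if w ≤ ThmA9.runB 1 (cs₁.map off) then w else 0 := by
  rw [postAttr_eq, hcv, List.foldl_append, List.foldl_cons]
  obtain ⟨L₁, L₂, hL, hm1, hm2⟩ := hc
  set st₁ := cs₁.foldl (step D) ((fun _ => (1:ℝ)), 0) with hst₁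
  have hb : st₁.1 x = ThmA9.runB 1 (cs₁.map off) := foldl_budget D x off cs₁ _ h₁
  have hk : st₁.2 (x, c₀) = 0 := by
    rw [hst₁, foldl_keep D x c₀ cs₁ _ h₀₁]; rfl
  have hstep := (AP_mem c₀ x w L₁ L₂ st₁ hm1 hm2).2
  rw [← hL] at hstep
  rw [foldl_keep D x c₀ cs₂ _ h₀₂,
    show step D st₁ c₀ = applyPairs idsc c₀ (pairsOf D c₀) st₁ from rfl, hstep, hk, hb]
  simp

end ThmA9X
namespace ThmA9X

def yimp (q i : ℕ) : Impression := ⟨i * q, 0, 0, 0, i⟩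
def ycon (q j t : ℕ) : Conversion := ⟨j * q + t, 0, 0, j * q + t⟩

noncomputable def convs (q : ℕ) : List Conversion :=
  (List.range' 4 (q - 3)).flatMap fun j => (List.range' 1 (j - 2)).map (ycon q j)

noncomputable def DR (q : ℕ) : Dataset := ⟨(List.range' 1 q).map (yimp q), convs q⟩
noncomputable def DL (q : ℕ) : Dataset := ⟨(List.range' 2 (q - 1)).map (yimp q), convs q⟩

lemma yimp_inj (q : ℕ) {i i' : ℕ} (h : yimp q i = yimp q i') : i = i' := by
  have := congrArg Impression.id h
  simpa [yimp] using this

lemma range'_split (a m k : ℕ) (h1 : a ≤ k) (h2 : k < a + m) :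
    List.range' a m = List.range' a (k - a) ++ k :: List.range' (k + 1) (a + m - k - 1) := by
  have e1 := List.range'_append (s := a) (m := k - a) (n := m - (k - a)) (step := 1)
  rw [Nat.one_mul, show a + (k - a) = k by omega,
    show k - a + (m - (k - a)) = m by omega] at e1
  rw [← e1]
  congr 1
  rw [show m - (k - a) = (a + m - k - 1) + 1 by omega, List.range'_succ]

lemma eligible_eq (q a n j t : ℕ) (cs : List Conversion)
    (hq : 1 ≤ q) (ht1 : 1 ≤ t) (htq : t < q) (haj : a ≤ j) (hjn : j < a + n) :
    eligible ⟨(List.range' a n).map (yimp q), cs⟩ (ycon q j t) =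
      (List.range' a (j + 1 - a)).map (yimp q) := by
  unfold eligible
  rw [List.filter_map]
  have hsplit : List.range' a n = List.range' a (j + 1 - a) ++ List.range' (j + 1) (a + n - (j + 1)) := by
    have := List.range'_append (s := a) (m := j + 1 - a) (n := a + n - (j + 1)) (step := 1)
    rw [Nat.one_mul] at this
    rw [show a + (j + 1 - a) = j + 1 by omega] at this
    rw [show j + 1 - a + (a + n - (j + 1)) = n by omega] at this
    exact this.symm
  rw [hsplit, List.filter_append]
  have hyes : ∀ i ∈ List.range' a (j + 1 - a),
      ((fun imp => decide (imp.time < (ycon q j t).time ∧ imp.user = (ycon q j t).user ∧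
        imp.adv = (ycon q j t).adv)) ∘ (yimp q)) i = true := by
    intro i hi
    rw [List.mem_range'_1] at hi
    have : i ≤ j := by omega
    have hlt : i * q < j * q + t := by
      calc i * q ≤ j * q := Nat.mul_le_mul_right q this
      _ < j * q + t := by omega
    simp [yimp, ycon, hlt]
  have hno : ∀ i ∈ List.range' (j + 1) (a + n - (j + 1)),
      ¬ ((fun imp => decide (imp.time < (ycon q j t).time ∧ imp.user = (ycon q j t).user ∧
        imp.adv = (ycon q j t).adv)) ∘ (yimp q)) i = true := by
    intro i hi
    rw [List.mem_range'_1] at hi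
    simp only [Function.comp_apply, yimp, ycon, decide_eq_true_iff]
    intro hh
    have hlt := hh.1
    have h1 : (j + 1) * q ≤ i * q := Nat.mul_le_mul_right q hi.1
    have h2 : j * q + q ≤ i * q := by rw [Nat.succ_mul] at h1; omega
    omega
  rw [List.filter_eq_self.mpr hyes, List.filter_eq_nil_iff.mpr hno, List.append_nil]

lemma USH_eval (l : List Impression) (c : Conversion) (h : 3 ≤ l.length) :
    USH l c = 0.4 :: (List.replicate (l.length - 2) ((0.2 : ℝ) / ((l.length : ℝ) - 2)) ++ [0.4]) := by
  match l, h with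
  | a :: b :: d :: rest, _ => rfl

end ThmA9X
namespace ThmA9X

lemma map_g (a m : ℕ) (hm : 2 ≤ m) (w : ℝ) :
    (List.range' a m).map (fun i => if i = a ∨ i = a + m - 1 then (0.4 : ℝ) else w) =
      0.4 :: (List.replicate (m - 2) w ++ [0.4]) := by
  set g : ℕ → ℝ := fun i => if i = a ∨ i = a + m - 1 then (0.4 : ℝ) else w with hg
  have e1 : List.range' a m = a :: List.range' (a + 1) (m - 1) := by
    conv_lhs => rw [show m = (m - 1) + 1 by omega, List.range'_succ]
  have e2 : List.range' (a + 1) (m - 1) = List.range' (a + 1) (m - 2) ++ [a + m - 1] := by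
    have := List.range'_append (s := a + 1) (m := m - 2) (n := 1) (step := 1)
    rw [Nat.one_mul, show a + 1 + (m - 2) = a + m - 1 by omega] at this
    rw [show m - 1 = m - 2 + 1 by omega, ← this, List.range'_one]
  rw [e1, e2, List.map_cons, List.map_append]
  congr 1
  · simp [hg]
  congr 1
  · rw [List.eq_replicate_iff]
    constructor
    · simp
    · intro b hb
      rw [List.mem_map] at hb
      obtain ⟨i, hi, rfl⟩ := hb
      rw [List.mem_range'_1] at hi
      have h1 : i ≠ a := by omega
      have h2 : i ≠ a + m - 1 := by omega
      simp [hg, h1, h2]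
  · have h2 : a + m - 1 ≠ a := by omega
    simp [hg, h2]

lemma pairsOf_eq (q a n j t : ℕ) (cs : List Conversion)
    (ht1 : 1 ≤ t) (htq : t < q) (haj : a ≤ j) (hjn : j < a + n) (h3 : 3 ≤ j + 1 - a) :
    pairsOf ⟨(List.range' a n).map (yimp q), cs⟩ (ycon q j t) =
      (List.range' a (j + 1 - a)).map
        (fun i => (yimp q i,
          if i = a ∨ i = j then (0.4 : ℝ) else 0.2 / (((j + 1 - a : ℕ) : ℝ) - 2))) := by
  have hq : 1 ≤ q := by omega
  rw [pairsOf]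
  rw [eligible_eq q a n j t cs hq ht1 htq haj hjn]
  set m := j + 1 - a with hm
  have hlen : ((List.range' a m).map (yimp q)).length = m := by simp
  rw [USH_eval _ _ (by rw [hlen]; omega), hlen]
  have := map_g a m (by omega) (0.2 / ((m : ℝ) - 2))
  rw [show a + m - 1 = j by omega] at this
  rw [← this, List.zip_map']

lemma compat_none_of_lt (q a n j t k : ℕ) (cs : List Conversion)
    (ht1 : 1 ≤ t) (htq : t < q) (haj : a ≤ j) (hjn : j < a + n) (h3 : 3 ≤ j + 1 - a)
    (hkj : j < k) :
    compat ⟨(List.range' a n).map (yimp q), cs⟩ (yimp q k) (ycon q j t) none := by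
  show yimp q k ∉ _
  rw [pairsOf_eq q a n j t cs ht1 htq haj hjn h3]
  intro hmem
  rw [List.map_map, List.mem_map] at hmem
  obtain ⟨i, hi, he⟩ := hmem
  rw [List.mem_range'_1] at hi
  have := yimp_inj q he
  omega

lemma compat_some (q a n j t k : ℕ) (cs : List Conversion)
    (ht1 : 1 ≤ t) (htq : t < q) (haj : a ≤ j) (hjn : j < a + n) (h3 : 3 ≤ j + 1 - a)
    (hak : a ≤ k) (hkj : k ≤ j) :
    compat ⟨(List.range' a n).map (yimp q), cs⟩ (yimp q k) (ycon q j t)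
      (some (if k = a ∨ k = j then (0.4 : ℝ) else 0.2 / (((j + 1 - a : ℕ) : ℝ) - 2))) := by
  rw [compat, pairsOf_eq q a n j t cs ht1 htq haj hjn h3]
  set m := j + 1 - a with hm
  set pf : ℕ → Impression × ℝ :=
    fun i => (yimp q i, if i = a ∨ i = j then (0.4 : ℝ) else 0.2 / ((m : ℝ) - 2)) with hpf
  refine ⟨(List.range' a (k - a)).map pf, (List.range' (k + 1) (a + m - k - 1)).map pf, ?_, ?_, ?_⟩
  · rw [range'_split a m k hak (by omega), List.map_append, List.map_cons]
  · intro hmem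
    rw [List.map_map, List.mem_map] at hmem
    obtain ⟨i, hi, he⟩ := hmem
    rw [List.mem_range'_1] at hi
    have := yimp_inj q he
    omega
  · intro hmem
    rw [List.map_map, List.mem_map] at hmem
    obtain ⟨i, hi, he⟩ := hmem
    rw [List.mem_range'_1] at hi
    have := yimp_inj q he
    omega

end ThmA9X
namespace ThmA9X

lemma mem_block {q s n : ℕ} {c : Conversion}
    (h : c ∈ (List.range' s n).flatMap (fun j => (List.range' 1 (j - 2)).map (ycon q j))) :
    ∃ j t', (s ≤ j ∧ j < s + n) ∧ (1 ≤ t' ∧ t' ≤ j - 2) ∧ c = ycon q j t' := by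
  rw [List.mem_flatMap] at h
  obtain ⟨j, hj, hc⟩ := h
  rw [List.mem_range'_1] at hj
  rw [List.mem_map] at hc
  obtain ⟨t', ht', rfl⟩ := hc
  rw [List.mem_range'_1] at ht'
  exact ⟨j, t', hj, ⟨ht'.1, by omega⟩, rfl⟩

lemma ycon_time (q j t : ℕ) : (ycon q j t).time = j * q + t := rfl

noncomputable def cs₁ (q k t : ℕ) : List Conversion :=
  ((List.range' 4 (k - 4)).flatMap fun j => (List.range' 1 (j - 2)).map (ycon q j)) ++
    ((List.range' 1 (k - 2)).map (ycon q k) ++ (List.range' 1 (t - 1)).map (ycon q (k + 1)))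

noncomputable def cs₂ (q k t : ℕ) : List Conversion :=
  (List.range' (t + 1) (k - 1 - t)).map (ycon q (k + 1)) ++
    ((List.range' (k + 2) (q - k - 1)).flatMap fun j => (List.range' 1 (j - 2)).map (ycon q j))

lemma convs_split (q k t : ℕ) (hk4 : 4 ≤ k) (hkq : k + 1 ≤ q) (ht1 : 1 ≤ t) (htk : t ≤ k - 1) :
    convs q = cs₁ q k t ++ ycon q (k + 1) t :: cs₂ q k t := by
  have e1 : List.range' 4 (q - 3) =
      List.range' 4 (k - 4) ++ k :: (k + 1) :: List.range' (k + 2) (q - k - 1) := by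
    have := range'_split 4 (q - 3) k (by omega) (by omega)
    rw [show 4 + (q - 3) - k - 1 = q - k by omega] at this
    rw [show k - 4 = k - 4 by rfl] at this
    rw [this]
    congr 2
    conv_lhs => rw [show q - k = (q - k - 1) + 1 by omega, List.range'_succ]
  have e2 : List.range' 1 (k - 1) =
      List.range' 1 (t - 1) ++ t :: List.range' (t + 1) (k - 1 - t) := by
    have := range'_split 1 (k - 1) t (by omega) (by omega)
    rw [show 1 + (k - 1) - t - 1 = k - 1 - t by omega, show t - 1 = t - 1 by rfl] at this
    exact this
  rw [convs, e1, List.flatMap_append, List.flatMap_cons, List.flatMap_cons]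
  rw [show (k + 1) - 2 = k - 1 by omega, e2, List.map_append, List.map_cons]
  rw [cs₁, cs₂]
  simp only [List.append_assoc, List.cons_append, List.nil_append]

lemma target_notmem₁ (q k t : ℕ) (hk4 : 4 ≤ k) (hkq : k + 1 ≤ q) (ht1 : 1 ≤ t) (htk : t ≤ k - 1) :
    ycon q (k + 1) t ∉ cs₁ q k t := by
  intro h
  rw [cs₁, List.mem_append, List.mem_append] at h
  have htgt : (ycon q (k + 1) t).time = (k + 1) * q + t := rfl
  rcases h with h | h | h
  · obtain ⟨j, t', hj, ht', he⟩ := mem_block h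
    have := congrArg Conversion.time he
    rw [ycon_time, ycon_time] at this
    have h1 : j * q + t' < k * q := by
      have : t' < q := by omega
      have : j * q ≤ (k - 1) * q := Nat.mul_le_mul_right q (by omega)
      have hkk : (k - 1) * q + q = k * q := by
        rw [← Nat.succ_mul]; congr 1; omega
      omega
    have h2 : k * q ≤ (k + 1) * q := Nat.mul_le_mul_right q (by omega)
    omega
  · rw [List.mem_map] at h
    obtain ⟨t', ht', he⟩ := h
    rw [List.mem_range'_1] at ht'
    have := congrArg Conversion.time he
    rw [ycon_time, ycon_time] at this
    have : k * q + t' < (k + 1) * q := by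
      have : t' < q := by omega
      rw [Nat.succ_mul]
      omega
    omega
  · rw [List.mem_map] at h
    obtain ⟨t', ht', he⟩ := h
    rw [List.mem_range'_1] at ht'
    have := congrArg Conversion.time he
    rw [ycon_time, ycon_time] at this
    omega

lemma target_notmem₂ (q k t : ℕ) (hk4 : 4 ≤ k) (hkq : k + 1 ≤ q) (ht1 : 1 ≤ t) (htk : t ≤ k - 1) :
    ycon q (k + 1) t ∉ cs₂ q k t := by
  intro h
  rw [cs₂, List.mem_append] at h
  rcases h with h | h
  · rw [List.mem_map] at h
    obtain ⟨t', ht', he⟩ := h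
    rw [List.mem_range'_1] at ht'
    have := congrArg Conversion.time he
    rw [ycon_time, ycon_time] at this
    omega
  · obtain ⟨j, t', hj, ht', he⟩ := mem_block h
    have := congrArg Conversion.time he
    rw [ycon_time, ycon_time] at this
    have h1 : (k + 2) * q ≤ j * q := Nat.mul_le_mul_right q (by omega)
    have h2 : (k + 1) * q + q = (k + 2) * q := by rw [Nat.succ_mul (k+1) q]
    have : t < q := by omega
    omega

end ThmA9X
namespace ThmA9X

noncomputable def offf (q k : ℕ) (w : ℝ) : Conversion → Option ℝ := fun cv =>
  if cv.time < k * q then none else if cv.time < (k + 1) * q then some (0.4 : ℝ) else some w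

lemma value_gen (q a n k t : ℕ) (w : ℝ)
    (han : a + n = q + 1) (ha : 1 ≤ a) (ha2 : a ≤ 2)
    (hk4 : 4 ≤ k) (hkq : k + 1 ≤ q) (ht1 : 1 ≤ t) (htk : t ≤ k - 1)
    (hw : w = 0.2 / (((k + 2 - a : ℕ) : ℝ) - 2)) :
    postAttr USH (fun i => i) 1 ⟨(List.range' a n).map (yimp q), convs q⟩
        (yimp q k, ycon q (k + 1) t) = if t ≤ k - a then w else 0 := by
  set Da : Dataset := ⟨(List.range' a n).map (yimp q), convs q⟩ with hDa
  have hqk : k < q := by omega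
  -- the target weight: k is a middle impression for level k+1
  have hck : ¬ (k = a ∨ k = k + 1) := by omega
  have hwt : (if k = a ∨ k = k + 1 then (0.4 : ℝ) else 0.2 / (((k + 1 + 1 - a : ℕ) : ℝ) - 2)) = w := by
    rw [if_neg hck, hw, show k + 1 + 1 - a = k + 2 - a from by omega]
  have hcomp_target : compat Da (yimp q k) (ycon q (k + 1) t) (some w) := by
    rw [← hwt]
    exact compat_some q a n (k + 1) t k (convs q) ht1 (by omega) (by omega) (by omega)
      (by omega) (by omega) (by omega)
  -- compat along cs₁
  have hcomp₁ : ∀ c ∈ cs₁ q k t, compat Da (yimp q k) c (offf q k w c) := by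
    intro c hc
    rw [cs₁, List.mem_append, List.mem_append] at hc
    rcases hc with hc | hc | hc
    · obtain ⟨j, t', hj, ht', rfl⟩ := mem_block hc
      have htime : (ycon q j t').time = j * q + t' := rfl
      have hlt : j * q + t' < k * q := by
        have h1 : t' < q := by omega
        have h2 : j * q + q ≤ k * q := by
          have := Nat.mul_le_mul_right q (show j + 1 ≤ k by omega)
          rwa [Nat.succ_mul] at this
        omega
      rw [offf, htime, if_pos hlt]
      exact compat_none_of_lt q a n j t' k (convs q) ht'.1 (by omega) (by omega) (by omega)
        (by omega) (by omega)
    · rw [List.mem_map] at hc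
      obtain ⟨t', ht', rfl⟩ := hc
      rw [List.mem_range'_1] at ht'
      have htime : (ycon q k t').time = k * q + t' := rfl
      have h1 : ¬ (k * q + t' < k * q) := by omega
      have h2 : k * q + t' < (k + 1) * q := by
        have : t' < q := by omega
        rw [Nat.succ_mul]; omega
      rw [offf, htime, if_neg h1, if_pos h2]
      have := compat_some q a n k t' k (convs q) ht'.1 (by omega) (by omega) (by omega)
        (by omega) (by omega) (by omega)
      simpa using this
    · rw [List.mem_map] at hc
      obtain ⟨t', ht', rfl⟩ := hc
      rw [List.mem_range'_1] at ht'
      have htime : (ycon q (k + 1) t').time = (k + 1) * q + t' := rfl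
      have h1 : ¬ ((k + 1) * q + t' < k * q) := by
        have := Nat.mul_le_mul_right q (show k ≤ k + 1 by omega)
        omega
      have h2 : ¬ ((k + 1) * q + t' < (k + 1) * q) := by omega
      rw [offf, htime, if_neg h1, if_neg h2]
      rw [← hwt]
      exact compat_some q a n (k + 1) t' k (convs q) ht'.1 (by omega) (by omega) (by omega)
        (by omega) (by omega) (by omega)
  have hval := value_at Da (yimp q k) (ycon q (k + 1) t) w (offf q k w)
    (cs₁ q k t) (cs₂ q k t)
    (by rw [show Da.convs = convs q from rfl]; exact convs_split q k t hk4 hkq ht1 htk)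
    hcomp_target hcomp₁
    (target_notmem₁ q k t hk4 hkq ht1 htk) (target_notmem₂ q k t hk4 hkq ht1 htk)
  rw [hval]
  -- now compute the budget
  have hmapA : ∀ o ∈ (((List.range' 4 (k - 4)).flatMap
      fun j => (List.range' 1 (j - 2)).map (ycon q j)).map (offf q k w)), o = none := by
    intro o ho
    rw [List.mem_map] at ho
    obtain ⟨c, hc, rfl⟩ := ho
    obtain ⟨j, t', hj, ht', rfl⟩ := mem_block hc
    have hlt : j * q + t' < k * q := by
      have h1 : t' < q := by omega
      have h2 : j * q + q ≤ k * q := by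
        have := Nat.mul_le_mul_right q (show j + 1 ≤ k by omega)
        rwa [Nat.succ_mul] at this
      omega
    rw [offf]
    exact if_pos hlt
  have hmapB : ((List.range' 1 (k - 2)).map (ycon q k)).map (offf q k w) =
      List.replicate (k - 2) (some (0.4 : ℝ)) := by
    rw [List.eq_replicate_iff]
    refine ⟨by simp, ?_⟩
    intro o ho
    rw [List.map_map, List.mem_map] at ho
    obtain ⟨t', ht', rfl⟩ := ho
    rw [List.mem_range'_1] at ht'
    have htime : (ycon q k t').time = k * q + t' := rfl
    have h1 : ¬ (k * q + t' < k * q) := by omega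
    have h2 : k * q + t' < (k + 1) * q := by
      have : t' < q := by omega
      rw [Nat.succ_mul]; omega
    simp only [Function.comp_apply, offf, htime, if_neg h1, if_pos h2]
  have hmapC : ((List.range' 1 (t - 1)).map (ycon q (k + 1))).map (offf q k w) =
      List.replicate (t - 1) (some w) := by
    rw [List.eq_replicate_iff]
    refine ⟨by simp, ?_⟩
    intro o ho
    rw [List.map_map, List.mem_map] at ho
    obtain ⟨t', ht', rfl⟩ := ho
    rw [List.mem_range'_1] at ht'
    have htime : (ycon q (k + 1) t').time = (k + 1) * q + t' := rfl
    have h1 : ¬ ((k + 1) * q + t' < k * q) := by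
      have := Nat.mul_le_mul_right q (show k ≤ k + 1 by omega)
      omega
    have h2 : ¬ ((k + 1) * q + t' < (k + 1) * q) := by omega
    simp only [Function.comp_apply, offf, htime, if_neg h1, if_neg h2]
  have hwpos : 0 < w := by
    rw [hw]
    apply div_pos (by norm_num)
    have : (4 : ℝ) ≤ ((k + 2 - a : ℕ) : ℝ) := by
      have : 4 ≤ k + 2 - a := by omega
      exact_mod_cast this
    linarith
  have hbud : ThmA9.runB 1 ((cs₁ q k t).map (offf q k w)) = ((k - a - (t - 1) : ℕ) : ℝ) * w := by
    rw [cs₁, List.map_append, List.map_append, ThmA9.runB_append, ThmA9.runB_append]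
    rw [ThmA9.runB_none _ _ hmapA, hmapB, hmapC, ThmA9.runB_04 _ (by omega)]
    have h02 : (0.2 : ℝ) = ((k - a : ℕ) : ℝ) * w := by
      rw [hw]
      have hne : ((k + 2 - a : ℕ) : ℝ) - 2 ≠ 0 := by
        have : (4 : ℝ) ≤ ((k + 2 - a : ℕ) : ℝ) := by
          have : 4 ≤ k + 2 - a := by omega
          exact_mod_cast this
        linarith
      have hcast : ((k - a : ℕ) : ℝ) = ((k + 2 - a : ℕ) : ℝ) - 2 := by
        have h1 : ((k - a : ℕ) : ℝ) = (k : ℝ) - (a : ℝ) := by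
          have : a ≤ k := by omega
          push_cast [Nat.cast_sub this]; ring
        have h2 : ((k + 2 - a : ℕ) : ℝ) = (k : ℝ) + 2 - (a : ℝ) := by
          have : a ≤ k + 2 := by omega
          push_cast [Nat.cast_sub this]; ring
        rw [h1, h2]; ring
      rw [hcast]
      field_simp
    rw [h02, ThmA9.runB_mul w hwpos (t - 1) (k - a) (by omega)]
  rw [hbud]
  by_cases hta : t ≤ k - a
  · rw [if_pos hta, if_pos]
    have h1 : 1 ≤ k - a - (t - 1) := by omega
    have : (1 : ℝ) ≤ ((k - a - (t - 1) : ℕ) : ℝ) := by exact_mod_cast h1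
    nlinarith
  · rw [if_neg hta, if_neg]
    have h0 : k - a - (t - 1) = 0 := by omega
    rw [h0]
    simp
    linarith

end ThmA9X
namespace ThmA9X

lemma value_DR (q k t : ℕ) (hk4 : 4 ≤ k) (hkq : k + 1 ≤ q) (ht1 : 1 ≤ t) (htk : t ≤ k - 1) :
    postAttr USH (fun i => i) 1 (DR q) (yimp q k, ycon q (k + 1) t) = 0.2 / ((k : ℝ) - 1) := by
  have h := value_gen q 1 q k t (0.2 / (((k + 2 - 1 : ℕ) : ℝ) - 2)) (by omega) (by omega) (by omega)
    hk4 hkq ht1 htk rfl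
  rw [show (⟨(List.range' 1 q).map (yimp q), convs q⟩ : Dataset) = DR q from rfl] at h
  rw [h, if_pos (by omega : t ≤ k - 1)]
  have h1 : ((k + 2 - 1 : ℕ) : ℝ) = (k : ℝ) + 1 := by
    push_cast [show k + 2 - 1 = k + 1 from by omega]; ring
  rw [h1]
  congr 1
  ring

lemma value_DL (q k t : ℕ) (hk4 : 4 ≤ k) (hkq : k + 1 ≤ q) (ht1 : 1 ≤ t) (htk : t ≤ k - 1) :
    postAttr USH (fun i => i) 1 (DL q) (yimp q k, ycon q (k + 1) t) =
      if t ≤ k - 2 then 0.2 / ((k : ℝ) - 2) else 0 := by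
  have h := value_gen q 2 (q - 1) k t (0.2 / (((k + 2 - 2 : ℕ) : ℝ) - 2)) (by omega) (by omega)
    (by omega) hk4 hkq ht1 htk rfl
  rw [show (⟨(List.range' 2 (q - 1)).map (yimp q), convs q⟩ : Dataset) = DL q from rfl] at h
  rw [h]
  have h1 : ((k + 2 - 2 : ℕ) : ℝ) = (k : ℝ) := by
    push_cast [show k + 2 - 2 = k from by omega]; ring
  rw [h1]

lemma l1dist_ge (f g : Fsp) (S : Finset (Impression × Conversion)) :
    ∑ z ∈ S, |f z - g z| ≤ l1dist f g := by
  rw [l1dist, Finsupp.sum]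
  have h1 : ∀ z, |f z - g z| = |(f - g) z| := fun z => by rw [Finsupp.sub_apply]
  calc ∑ z ∈ S, |f z - g z| = ∑ z ∈ S, |(f - g) z| := by simp only [h1]
    _ = ∑ z ∈ S.filter (fun z => (f - g) z ≠ 0), |(f - g) z| := by
        rw [Finset.sum_filter_of_ne]
        intro z _ hz h0
        rw [h0] at hz
        simp at hz
    _ ≤ ∑ z ∈ (f - g).support, |(f - g) z| := by
        apply Finset.sum_le_sum_of_subset_of_nonneg
        · intro z hz
          rw [Finset.mem_filter] at hz
          rw [Finsupp.mem_support_iff]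
          exact hz.2
        · intro z _ _
          exact abs_nonneg _

lemma l1dist_nonneg (f g : Fsp) : 0 ≤ l1dist f g := by
  simpa using l1dist_ge f g ∅

lemma inner_sum (q k : ℕ) (hk4 : 4 ≤ k) (hkq : k + 1 ≤ q) :
    ∑ t ∈ Finset.Ico 1 k,
      |postAttr USH (fun i => i) 1 (DL q) (yimp q k, ycon q (k + 1) t) -
        postAttr USH (fun i => i) 1 (DR q) (yimp q k, ycon q (k + 1) t)| =
      0.4 / ((k : ℝ) - 1) := by
  have hk4r : (4:ℝ) ≤ (k:ℝ) := by exact_mod_cast hk4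
  have hk1 : (0:ℝ) < (k : ℝ) - 1 := by linarith
  have hk2 : (0:ℝ) < (k : ℝ) - 2 := by linarith
  have hvals : ∀ t ∈ Finset.Ico 1 k,
      |postAttr USH (fun i => i) 1 (DL q) (yimp q k, ycon q (k + 1) t) -
        postAttr USH (fun i => i) 1 (DR q) (yimp q k, ycon q (k + 1) t)| =
      if t ≤ k - 2 then 0.2 / ((k : ℝ) - 2) - 0.2 / ((k : ℝ) - 1) else 0.2 / ((k : ℝ) - 1) := by
    intro t ht
    rw [Finset.mem_Ico] at ht
    rw [value_DR q k t hk4 hkq ht.1 (by omega), value_DL q k t hk4 hkq ht.1 (by omega)]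
    by_cases h : t ≤ k - 2
    · rw [if_pos h, if_pos h, abs_of_nonneg]
      have : 0.2 / ((k : ℝ) - 1) ≤ 0.2 / ((k : ℝ) - 2) := by
        apply div_le_div_of_nonneg_left (by norm_num) hk2 (by linarith)
      linarith
    · rw [if_neg h, if_neg h, zero_sub, abs_neg, abs_of_nonneg]
      positivity
  rw [Finset.sum_congr rfl hvals]
  rw [show k = (k - 1) + 1 from by omega, Finset.sum_Ico_succ_top (by omega : 1 ≤ k - 1)]
  have hlast : ¬ (k - 1 ≤ (k - 1) + 1 - 2) := by omega
  rw [if_neg hlast]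
  have hmid : ∀ t ∈ Finset.Ico 1 (k - 1),
      (if t ≤ (k - 1) + 1 - 2 then 0.2 / ((((k-1)+1 : ℕ) : ℝ) - 2) - 0.2 / ((((k-1)+1 : ℕ) : ℝ) - 1)
        else 0.2 / ((((k-1)+1 : ℕ) : ℝ) - 1)) =
      0.2 / ((((k-1)+1 : ℕ) : ℝ) - 2) - 0.2 / ((((k-1)+1 : ℕ) : ℝ) - 1) := by
    intro t ht
    rw [Finset.mem_Ico] at ht
    rw [if_pos (by omega)]
  rw [Finset.sum_congr rfl hmid, Finset.sum_const, Nat.card_Ico]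
  have hcast : ((k - 1) + 1 : ℕ) = k := by omega
  rw [hcast]
  have hc2 : ((k - 1 - 1 : ℕ) : ℝ) = (k : ℝ) - 2 := by
    have : k - 1 - 1 = k - 2 := by omega
    rw [this]
    push_cast [Nat.cast_sub (show 2 ≤ k by omega)]
    ring
  rw [nsmul_eq_mul, hc2]
  field_simp
  ring

end ThmA9X
namespace ThmA9X

lemma addone (q : ℕ) (hq : 6 ≤ q) : AddOneImpression (DL q) (DR q) := by
  refine ⟨yimp q 1, [], (List.range' 2 (q - 1)).map (yimp q), by simp [DL], ?_, rfl⟩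
  show (List.range' 1 q).map (yimp q) = [] ++ yimp q 1 :: (List.range' 2 (q - 1)).map (yimp q)
  rw [List.nil_append]
  have hr : List.range' 1 q = 1 :: List.range' 2 (q - 1) := by
    conv_lhs => rw [show q = (q - 1) + 1 from by omega]
    rw [List.range'_succ]
  rw [hr, List.map_cons]

lemma sortedDR (q : ℕ) (hq : 6 ≤ q) : SortedDS (DR q) := by
  constructor
  · show ((List.range' 1 q).map (yimp q)).Pairwise _
    rw [List.pairwise_map]
    apply (List.pairwise_lt_range' (s := 1) (n := q)).imp
    intro i j hij
    show i * q ≤ j * q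
    exact Nat.mul_le_mul_right q (le_of_lt hij)
  · show (convs q).Pairwise _
    rw [convs, List.pairwise_flatMap]
    constructor
    · intro j hj
      rw [List.pairwise_map]
      apply (List.pairwise_lt_range' (s := 1) (n := j - 2)).imp
      intro t t' htt
      show j * q + t ≤ j * q + t'
      omega
    · apply List.Pairwise.imp_of_mem ?_ (List.pairwise_lt_range' (s := 4) (n := q - 3))
      intro j j' hj hj' hlt x hx y hy
      rw [List.mem_range'_1] at hj hj'
      rw [List.mem_map] at hx hy
      obtain ⟨t, ht, rfl⟩ := hx
      obtain ⟨t', ht', rfl⟩ := hy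
      rw [List.mem_range'_1] at ht ht'
      show j * q + t ≤ j' * q + t'
      have h1 : t < q := by omega
      have h2 : j * q + q ≤ j' * q := by
        have := Nat.mul_le_mul_right q (show j + 1 ≤ j' by omega)
        rwa [Nat.succ_mul] at this
      omega

lemma total_sum (q : ℕ) (hq : 6 ≤ q) :
    0.4 * (Real.log ((q : ℝ) - 1) - Real.log 3) ≤
      l1dist (postAttr USH (fun i => i) 1 (DL q)) (postAttr USH (fun i => i) 1 (DR q)) := by
  set f := postAttr USH (fun i => i) 1 (DL q) with hf
  set g := postAttr USH (fun i => i) 1 (DR q) with hg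
  set T : Finset ((_ : ℕ) × ℕ) := (Finset.Ico 4 q).sigma (fun k => Finset.Ico 1 k) with hT
  set e : (_ : ℕ) × ℕ → Impression × Conversion :=
    fun p => (yimp q p.1, ycon q (p.1 + 1) p.2) with he
  have hinj : ∀ x ∈ T, ∀ y ∈ T, e x = e y → x = y := by
    rintro ⟨k, t⟩ _ ⟨k', t'⟩ _ hxy
    rw [he, Prod.mk.injEq] at hxy
    dsimp only at hxy
    have hk : k = k' := yimp_inj q hxy.1
    subst hk
    have := congrArg Conversion.time hxy.2
    rw [ycon_time, ycon_time] at this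
    have : t = t' := by omega
    subst this
    rfl
  have hs1 : ∑ z ∈ Finset.image e T, |f z - g z| = ∑ p ∈ T, |f (e p) - g (e p)| :=
    Finset.sum_image hinj
  have hs2 : ∑ p ∈ T, |f (e p) - g (e p)| =
      ∑ k ∈ Finset.Ico 4 q, ∑ t ∈ Finset.Ico 1 k, |f (e ⟨k, t⟩) - g (e ⟨k, t⟩)| :=
    Finset.sum_sigma _ _ _
  have hs3 : ∑ k ∈ Finset.Ico 4 q, ∑ t ∈ Finset.Ico 1 k, |f (e ⟨k, t⟩) - g (e ⟨k, t⟩)| =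
      ∑ k ∈ Finset.Ico 4 q, 0.4 / ((k : ℝ) - 1) := by
    apply Finset.sum_congr rfl
    intro k hk
    rw [Finset.mem_Ico] at hk
    exact inner_sum q k hk.1 (by omega)
  have hs4 : 0.4 * (Real.log ((q : ℝ) - 1) - Real.log 3) ≤
      ∑ k ∈ Finset.Ico 4 q, 0.4 / ((k : ℝ) - 1) := by
    rw [Finset.sum_Ico_eq_sum_range]
    have htel : ∑ i ∈ Finset.range (q - 4),
        (Real.log ((i : ℝ) + 1 + 3) - Real.log ((i : ℝ) + 3)) =
        Real.log (((q - 4 : ℕ) : ℝ) + 3) - Real.log 3 := by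
      have h0 := Finset.sum_range_sub (fun i => Real.log ((i : ℝ) + 3)) (q - 4)
      push_cast at h0
      norm_num at h0
      rw [Finset.sum_sub_distrib]
      exact h0
    have hq1 : ((q - 4 : ℕ) : ℝ) + 3 = (q : ℝ) - 1 := by
      push_cast [Nat.cast_sub (show 4 ≤ q by omega)]
      ring
    have hpt : ∀ i ∈ Finset.range (q - 4),
        0.4 * (Real.log ((i : ℝ) + 1 + 3) - Real.log ((i : ℝ) + 3)) ≤
          0.4 / (((4 + i : ℕ) : ℝ) - 1) := by
      intro i _
      have hx3 : (0 : ℝ) < (i : ℝ) + 3 := by positivity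
      have hx4 : (0 : ℝ) < (i : ℝ) + 4 := by positivity
      have hlog : Real.log ((i : ℝ) + 1 + 3) - Real.log ((i : ℝ) + 3) ≤ 1 / ((i : ℝ) + 3) := by
        rw [show (i : ℝ) + 1 + 3 = (i : ℝ) + 4 by ring,
          ← Real.log_div (ne_of_gt hx4) (ne_of_gt hx3)]
        have := Real.log_le_sub_one_of_pos (show (0:ℝ) < ((i : ℝ) + 4) / ((i : ℝ) + 3) by positivity)
        have he : ((i : ℝ) + 4) / ((i : ℝ) + 3) - 1 = 1 / ((i : ℝ) + 3) := by
          field_simp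
          norm_num
        linarith
      have hc : (((4 + i : ℕ) : ℝ) - 1) = (i : ℝ) + 3 := by push_cast; ring
      rw [hc, show (0.4 : ℝ) / ((i : ℝ) + 3) = 0.4 * (1 / ((i : ℝ) + 3)) by ring]
      nlinarith
    calc 0.4 * (Real.log ((q : ℝ) - 1) - Real.log 3)
        = 0.4 * (Real.log (((q - 4 : ℕ) : ℝ) + 3) - Real.log 3) := by
          rw [hq1]
      _ = ∑ i ∈ Finset.range (q - 4),
            0.4 * (Real.log ((i : ℝ) + 1 + 3) - Real.log ((i : ℝ) + 3)) := by
          rw [← Finset.mul_sum, htel]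
      _ ≤ ∑ i ∈ Finset.range (q - 4), 0.4 / (((4 + i : ℕ) : ℝ) - 1) :=
          Finset.sum_le_sum hpt
  calc 0.4 * (Real.log ((q : ℝ) - 1) - Real.log 3)
      ≤ ∑ k ∈ Finset.Ico 4 q, 0.4 / ((k : ℝ) - 1) := hs4
    _ = ∑ z ∈ Finset.image e T, |f z - g z| := by rw [hs1, hs2, hs3]
    _ ≤ l1dist f g := l1dist_ge f g _

end ThmA9X
/-- Theorem A.9: for U-shaped attribution, the impression adjacency relation with
post-attribution enforcement is invalid: with bound `r = 1`, for every `p > 3` there are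
adjacent datasets with attributed datasets at ℓ₁-distance at least `0.2 ln((p-1)/4)`;
hence the distance is not bounded by any absolute constant `C₀`. -/
theorem post_attr_impression_ushaped_invalid :
    (∀ p : ℕ, 3 < p → ∃ D D' : Dataset, AddOneImpression D D' ∧ SortedDS D' ∧
      (0.2 : ℝ) * Real.log (((p : ℝ) - 1) / 4) ≤
        l1dist (postAttr USH (fun i => i) 1 D) (postAttr USH (fun i => i) 1 D')) ∧
    (∀ C₀ : ℝ, 0 < C₀ → ∃ D D' : Dataset, AddOneImpression D D' ∧ SortedDS D' ∧
      C₀ < l1dist (postAttr USH (fun i => i) 1 D) (postAttr USH (fun i => i) 1 D')) := by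
  have key : ∀ q : ℕ, 6 ≤ q →
      0.2 * Real.log (((q : ℝ) - 1) / 4) ≤
        l1dist (postAttr USH (fun i => i) 1 (ThmA9X.DL q))
          (postAttr USH (fun i => i) 1 (ThmA9X.DR q)) := by
    intro q hq6
    have hts := ThmA9X.total_sum q hq6
    have hx : (5 : ℝ) ≤ (q : ℝ) - 1 := by
      have : (6 : ℝ) ≤ (q : ℝ) := by exact_mod_cast hq6
      linarith
    have hlog : 0.2 * Real.log (((q : ℝ) - 1) / 4) ≤
        0.4 * (Real.log ((q : ℝ) - 1) - Real.log 3) := by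
      rw [Real.log_div (by linarith) (by norm_num)]
      have h94 : Real.log (9 / 4) ≤ Real.log ((q : ℝ) - 1) :=
        Real.log_le_log (by norm_num) (by linarith)
      have h9 : Real.log ((9 : ℝ) / 4) = 2 * Real.log 3 - Real.log 4 := by
        rw [show (9 : ℝ) / 4 = 3 ^ 2 / 4 by norm_num,
          Real.log_div (by norm_num) (by norm_num), Real.log_pow]
        push_cast
        ring
      linarith
    linarith
  constructor
  · intro p hp
    by_cases hp6 : 6 ≤ p
    · exact ⟨ThmA9X.DL p, ThmA9X.DR p, ThmA9X.addone p hp6, ThmA9X.sortedDR p hp6, key p hp6⟩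
    · refine ⟨ThmA9X.DL 6, ThmA9X.DR 6, ThmA9X.addone 6 le_rfl, ThmA9X.sortedDR 6 le_rfl, ?_⟩
      have hp4 : (4 : ℝ) ≤ (p : ℝ) := by exact_mod_cast hp
      have hp5 : (p : ℝ) ≤ 5 := by
        have : p ≤ 5 := by omega
        exact_mod_cast this
      have h1 : Real.log (((p : ℝ) - 1) / 4) ≤ 0 := by
        apply Real.log_nonpos
        · apply div_nonneg (by linarith) (by norm_num)
        · rw [div_le_one (by norm_num)]
          linarith
      have h2 := ThmA9X.l1dist_nonneg (postAttr USH (fun i => i) 1 (ThmA9X.DL 6))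
        (postAttr USH (fun i => i) 1 (ThmA9X.DR 6))
      nlinarith
  · intro C₀ hC₀
    set p := 4 * ⌈Real.exp (5 * C₀)⌉₊ + 6 with hp
    have hp6 : 6 ≤ p := by omega
    refine ⟨ThmA9X.DL p, ThmA9X.DR p, ThmA9X.addone p hp6, ThmA9X.sortedDR p hp6, ?_⟩
    have hkey := key p hp6
    have hge : Real.exp (5 * C₀) ≤ (⌈Real.exp (5 * C₀)⌉₊ : ℝ) := Nat.le_ceil _
    have hcast : ((p : ℝ) - 1) / 4 = (⌈Real.exp (5 * C₀)⌉₊ : ℝ) + 5 / 4 := by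
      rw [hp]
      push_cast
      ring
    have hlt : Real.exp (5 * C₀) < ((p : ℝ) - 1) / 4 := by
      rw [hcast]
      linarith
    have hlog := Real.log_lt_log (Real.exp_pos _) hlt
    rw [Real.log_exp] at hlog
    linarith
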